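/- Let Γ be an ordered abelian group. If Γ is elementarily equivalent to ℚ ⊕ Δ (inverse lexicographic order) for some ordered abelian group Δ, then Γ has a nontrivial p-divisible convex subgroup for every prime p. -/

import Mathlib

open FirstOrder Language

/-- Function symbols of the language of ordered abelian groups: `0`, `-`, `+`. -/
inductive OAGFunc : ℕ → Type
  | zero : OAGFunc 0
  | neg : OAGFunc 1
  | add : OAGFunc 2

/-- Relation symbols of the language of ordered abelian groups: `≤`. -/
inductive OAGRel : ℕ → Type
  | le : OAGRel 2

/-- The first-order language of ordered abelian groups. -/
def oagLang : Language := ⟨OAGFunc, OAGRel⟩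

/-- The natural `oagLang`-structure on an ordered abelian group. -/
instance oagStructure (G : Type*) [AddCommGroup G] [LE G] : oagLang.Structure G where
  funMap {n} f v :=
    match n, f, v with
    | _, OAGFunc.zero, _ => 0
    | _, OAGFunc.neg, v => -(v 0)
    | _, OAGFunc.add, v => v 0 + v 1
  RelMap {n} r v :=
    match n, r, v with
    | _, OAGRel.le, v => v 0 ≤ v 1

section Terms

/-- The zero term. -/
def zeroT {n : ℕ} : oagLang.Term (Empty ⊕ Fin n) :=
  Constants.term (OAGFunc.zero : oagLang.Constants)

/-- Addition term. -/
def addT {n : ℕ} (s t : oagLang.Term (Empty ⊕ Fin n)) : oagLang.Term (Empty ⊕ Fin n) :=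
  Functions.apply₂ (OAGFunc.add : oagLang.Functions 2) s t

/-- Iterated addition term. -/
def smulT {n : ℕ} : ℕ → oagLang.Term (Empty ⊕ Fin n) → oagLang.Term (Empty ⊕ Fin n)
  | 0, _ => zeroT
  | k + 1, t => addT (smulT k t) t

/-- The `≤` formula. -/
def leF {n : ℕ} (s t : oagLang.Term (Empty ⊕ Fin n)) : oagLang.BoundedFormula Empty n :=
  Relations.boundedFormula₂ (OAGRel.le : oagLang.Relations 2) s t

variable {G : Type*} [AddCommGroup G] [LE G]

@[simp] lemma realize_zeroT {n : ℕ} (v : Empty ⊕ Fin n → G) :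
    (zeroT : oagLang.Term (Empty ⊕ Fin n)).realize v = 0 := rfl

@[simp] lemma realize_addT {n : ℕ} (s t : oagLang.Term (Empty ⊕ Fin n))
    (v : Empty ⊕ Fin n → G) : (addT s t).realize v = s.realize v + t.realize v := rfl

@[simp] lemma realize_smulT {n : ℕ} (k : ℕ) (t : oagLang.Term (Empty ⊕ Fin n))
    (v : Empty ⊕ Fin n → G) : (smulT k t).realize v = k • t.realize v := by
  induction k with
  | zero => simp [smulT]
  | succ k ih => simp [smulT, ih, succ_nsmul]

@[simp] lemma realize_leF {n : ℕ} (s t : oagLang.Term (Empty ⊕ Fin n))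
    (v : Empty → G) (xs : Fin n → G) :
    (leF s t).Realize v xs ↔ s.realize (Sum.elim v xs) ≤ t.realize (Sum.elim v xs) := by
  rfl

end Terms

/-- The sentence asserting existence of `x > 0` with `[0,x]` `p`-divisible. -/
def divSentence (p : ℕ) : oagLang.Sentence :=
  ∃' ((∼(leF (&0) zeroT)) ⊓
    ∀' ((leF zeroT (&1) ⊓ leF (&1) (&0)) ⟹
      ∃' (Term.bdEqual (smulT p (&2)) (&1))))

lemma realize_divSentence {G : Type*} [AddCommGroup G] [LE G] (p : ℕ) :
    (G ⊨ divSentence p) ↔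
      ∃ x : G, ¬ x ≤ 0 ∧ ∀ y : G, 0 ≤ y → y ≤ x → ∃ z : G, p • z = y := by
  simp only [divSentence, Sentence.Realize, Formula.Realize, BoundedFormula.realize_ex,
    BoundedFormula.realize_inf, BoundedFormula.realize_not, BoundedFormula.realize_all,
    BoundedFormula.realize_imp, BoundedFormula.realize_bdEqual, realize_leF,
    realize_zeroT, realize_smulT]
  constructor
  · rintro ⟨x, hx, h2⟩
    refine ⟨x, by simpa [Fin.snoc] using hx, fun y h0 hy => ?_⟩
    obtain ⟨z, hz⟩ := h2 y (by simpa [Fin.snoc] using ⟨h0, hy⟩)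
    exact ⟨z, by simpa [Fin.snoc] using hz⟩
  · rintro ⟨x, hx, h2⟩
    refine ⟨x, by simpa [Fin.snoc] using hx, fun y hy => ?_⟩
    obtain ⟨z, hz⟩ := h2 y (by simpa [Fin.snoc] using hy.1) (by simpa [Fin.snoc] using hy.2)
    exact ⟨z, by simpa [Fin.snoc] using hz⟩

lemma lex_realizes (Δ : Type*) [AddCommGroup Δ] [LinearOrder Δ] [IsOrderedAddMonoid Δ] (p : ℕ) (hp : 0 < p) :
    ∃ x : Lex (Δ × ℚ), ¬ x ≤ 0 ∧
      ∀ y : Lex (Δ × ℚ), 0 ≤ y → y ≤ x → ∃ z : Lex (Δ × ℚ), p • z = y := by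
  refine ⟨toLex (0, 1), ?_, ?_⟩
  · rw [show (0 : Lex (Δ × ℚ)) = toLex (0, 0) from rfl, Prod.Lex.le_iff]
    simp
  · intro y h0 hy
    obtain ⟨d, q⟩ := y
    rw [show (0 : Lex (Δ × ℚ)) = toLex (0, 0) from rfl] at h0
    have h0' : toLex ((0:Δ), (0:ℚ)) ≤ toLex (d, q) := h0
    have hy' : toLex (d, q) ≤ toLex ((0:Δ), (1:ℚ)) := hy
    clear h0 hy
    rw [Prod.Lex.le_iff] at h0' hy'
    rename' h0' => h0, hy' => hy
    simp only [ofLex_toLex] at h0 hy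
    have hd : d = 0 := by
      rcases h0 with h | h
      · rcases hy with h' | h' <;> [exact absurd (h.trans h') (lt_irrefl _); exact h'.1]
      · exact h.1.symm
    refine ⟨toLex (0, q / p), ?_⟩
    have : p • toLex ((0 : Δ), q / p) = toLex ((0 : Δ), p • (q / p)) := by
      show toLex (p • ((0 : Δ), q / (p : ℚ))) = _
      congr 1
      ext <;> simp
    rw [this]
    have h2 : p • (q / p) = q := by
      rw [nsmul_eq_mul]
      field_simp
    rw [h2, hd]
    rfl

/-- From a positive x with [0,x] p-divisible, build the convex p-divisible subgroup. -/
lemma build_subgroup {Γ : Type*} [AddCommGroup Γ] [LinearOrder Γ] [IsOrderedAddMonoid Γ] (p : ℕ) (hp : 0 < p)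
    (x : Γ) (hx : 0 < x) (hdiv : ∀ y : Γ, 0 ≤ y → y ≤ x → ∃ z : Γ, p • z = y) :
    ∃ C : AddSubgroup Γ, C ≠ ⊥ ∧
      (∀ a ∈ C, ∀ y : Γ, 0 ≤ y → y ≤ a → y ∈ C) ∧
      (∀ y ∈ C, ∃ z ∈ C, p • z = y) := by
  have hself : ∀ a : Γ, 0 ≤ a → a ≤ p • a := fun a ha => by
    calc a = 1 • a := (one_nsmul a).symm
    _ ≤ p • a := nsmul_le_nsmul_left ha hp
  -- key inductive lemma
  have key : ∀ n : ℕ, ∀ y : Γ, 0 ≤ y → y ≤ n • x → ∃ z : Γ, 0 ≤ z ∧ z ≤ n • x ∧ p • z = y := by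
    intro n
    induction n with
    | zero =>
      intro y h0 hy
      simp only [zero_smul] at hy ⊢
      exact ⟨0, le_refl 0, le_refl 0, by rw [smul_zero, le_antisymm hy h0]⟩
    | succ n ih =>
      intro y h0 hy
      rcases le_or_gt y (n • x) with h | h
      · obtain ⟨z, hz0, hzn, hzy⟩ := ih y h0 h
        exact ⟨z, hz0, hzn.trans (nsmul_le_nsmul_left hx.le (Nat.le_succ n)), hzy⟩
      · obtain ⟨w, hw⟩ := hdiv x (le_of_lt hx) le_rfl
        have hw0 : 0 ≤ w := (nsmul_nonneg_iff hp.ne').mp (hw ▸ hx.le)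
        have hwx : w ≤ x := (hself w hw0).trans hw.le
        obtain ⟨z, hz⟩ := hdiv (y - n • x) (sub_nonneg.mpr h.le)
          (by rw [succ_nsmul] at hy; exact sub_le_iff_le_add.mpr (hy.trans_eq (add_comm _ _)))
        have hz0 : 0 ≤ z := (nsmul_nonneg_iff hp.ne').mp (hz ▸ sub_nonneg.mpr h.le)
        have hzx : z ≤ x := (hself z hz0).trans (hz.le.trans (by
          rw [succ_nsmul] at hy
          exact sub_le_iff_le_add.mpr (hy.trans_eq (add_comm _ _))))
        refine ⟨z + n • w, by positivity, ?_, ?_⟩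
        · calc z + n • w ≤ x + n • x :=
                add_le_add hzx (nsmul_le_nsmul_right hwx n)
          _ = (n + 1) • x := by rw [succ_nsmul, add_comm]
        · rw [smul_add, hz, smul_comm, hw]
          abel
  let C : AddSubgroup Γ :=
    { carrier := {y : Γ | ∃ n : ℕ, |y| ≤ n • x}
      zero_mem' := ⟨0, by simp⟩
      add_mem' := by
        rintro a b ⟨m, hm⟩ ⟨n, hn⟩
        exact ⟨m + n, (abs_add_le a b).trans (by rw [add_smul]; exact add_le_add hm hn)⟩
      neg_mem' := by
        rintro a ⟨m, hm⟩
        exact ⟨m, by rwa [abs_neg]⟩ }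
  have hmem : ∀ y : Γ, y ∈ C ↔ ∃ n : ℕ, |y| ≤ n • x := fun y => Iff.rfl
  refine ⟨C, ?_, ?_, ?_⟩
  · intro hbot
    have hxmem : x ∈ C := (hmem x).mpr ⟨1, by simp [abs_of_pos hx]⟩
    rw [hbot, AddSubgroup.mem_bot] at hxmem
    exact absurd hxmem hx.ne'
  · intro a ha y hy0 hya
    obtain ⟨n, hn⟩ := (hmem a).mp ha
    exact (hmem y).mpr ⟨n, by rw [abs_of_nonneg hy0]; exact hya.trans ((le_abs_self a).trans hn)⟩
  · intro y hy
    obtain ⟨n, hn⟩ := (hmem y).mp hy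
    rcases le_or_gt 0 y with h0 | h0
    · obtain ⟨z, hz0, hzn, hzy⟩ := key n y h0 (by rwa [abs_of_nonneg h0] at hn)
      exact ⟨z, (hmem z).mpr ⟨n, by rwa [abs_of_nonneg hz0]⟩, hzy⟩
    · obtain ⟨z, hz0, hzn, hzy⟩ := key n (-y) (neg_nonneg.mpr h0.le)
        (by rwa [abs_of_neg h0] at hn)
      exact ⟨-z, (hmem (-z)).mpr ⟨n, by rwa [abs_neg, abs_of_nonneg hz0]⟩,
        by rw [smul_neg, hzy, neg_neg]⟩

/-- if an ordered abelian group `Γ` is elementarily equivalent to `ℚ ⊕ Δ`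
with the inverse lexicographic order (the `ℚ`-coordinate being less significant, i.e. to
`Lex (Δ × ℚ)`), then `Γ` has a nontrivial `p`-divisible convex subgroup for every prime. -/
theorem pDivisible_convex_of_elementarilyEquivalent_lex
    (Γ : Type*) [AddCommGroup Γ] [LinearOrder Γ] [IsOrderedAddMonoid Γ]
    (Δ : Type*) [AddCommGroup Δ] [LinearOrder Δ] [IsOrderedAddMonoid Δ]
    (h : oagLang.ElementarilyEquivalent Γ (Lex (Δ × ℚ)))
    (p : ℕ) (hp : p.Prime) :
    ∃ C : AddSubgroup Γ, C ≠ ⊥ ∧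
      (∀ x ∈ C, ∀ y : Γ, 0 ≤ y → y ≤ x → y ∈ C) ∧
      (∀ y ∈ C, ∃ z ∈ C, p • z = y) := by
  have hlex : (Lex (Δ × ℚ)) ⊨ divSentence p :=
    (realize_divSentence p).mpr (lex_realizes Δ p hp.pos)
  have hΓ : Γ ⊨ divSentence p :=
    (elementarilyEquivalent_iff.mp h (divSentence p)).mpr hlex
  obtain ⟨x, hx, hd⟩ := (realize_divSentence p).mp hΓ
  exact build_subgroup p hp.pos x (not_le.mp hx) hd
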